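/- arXiv:2108.09498 — 2 statements merged into one kernel-verified Lean document; each statement's English description precedes it below -/
import Mathlib

section
/- Let θ_1,…,θ_L ∈ [0,π), let φ_1,…,φ_L ∈ ℂ^T with ‖φ_l‖₂ = 1, let c_1,…,c_L > 0, and set X = Σ_{l=1}^{L} c_l a(θ_l) φ_l^*. Suppose there exists V ∈ ℂ^{N×T} such that V^* a(θ_l) = φ_l for every l = 1,…,L and sup_{θ ∈ [0,π)} ‖V^* a(θ)‖₂ ≤ 1. Then the atomic norm of X equals the sum of the coefficients: ‖X‖_𝒜 = Σ_{l=1}^{L} c_l. -/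
open Matrix Complex Set
open scoped ENNReal Pointwise

noncomputable section

/-- Receive steering vector `a(θ) ∈ ℂ^N`. -/
def steer (N : ℕ) (Δr : ℝ) (θ : ℝ) : Fin N → ℂ :=
  fun n => ((1 / Real.sqrt N : ℝ) : ℂ) *
    Complex.exp (-(Complex.I * (2 * Real.pi * Δr * (n : ℕ) * Real.cos θ)))

/-- The atom `a(θ)φ^* ∈ ℂ^{N×T}`. -/
def atomMat (N T : ℕ) (Δr : ℝ) (θ : ℝ) (φ : EuclideanSpace ℂ (Fin T)) :
    Matrix (Fin N) (Fin T) ℂ :=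
  Matrix.of fun n t => steer N Δr θ n * (starRingEnd ℂ) (φ t)

/-- The atomic set `𝒜`. -/
def atomSet (N T : ℕ) (Δr : ℝ) : Set (Matrix (Fin N) (Fin T) ℂ) :=
  {A | ∃ θ ∈ Set.Ico (0 : ℝ) Real.pi, ∃ φ : EuclideanSpace ℂ (Fin T),
    ‖φ‖ = 1 ∧ A = atomMat N T Δr θ φ}

/-- The atomic norm `‖X‖_𝒜 = inf {t > 0 : X ∈ t · conv 𝒜}`, with `inf ∅ = ∞`. -/
def atomicNorm (N T : ℕ) (Δr : ℝ) (X : Matrix (Fin N) (Fin T) ℂ) : ℝ≥0∞ :=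
  sInf {t : ℝ≥0∞ | ∃ r : ℝ, 0 < r ∧ t = ENNReal.ofReal r ∧
    X ∈ r • convexHull ℝ (atomSet N T Δr)}

/-- Vector-valued dual polynomial `q(θ) = V^* a(θ) ∈ ℂ^T`. -/
def dualPoly (N T : ℕ) (Δr : ℝ) (V : Matrix (Fin N) (Fin T) ℂ) (θ : ℝ) :
    EuclideanSpace ℂ (Fin T) :=
  WithLp.toLp 2 (fun t => ∑ n, (starRingEnd ℂ) (V n t) * steer N Δr θ n)

/-- Row selection `P_Ω` on matrices. -/
def rowSel {N T : ℕ} (Ω : Finset (Fin N)) (X : Matrix (Fin N) (Fin T) ℂ) :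
    Matrix Ω (Fin T) ℂ :=
  Matrix.of fun i t => X i.1 t

/-- Row selection `P_Ω` on vectors. -/
def rowSelVec {N : ℕ} (Ω : Finset (Fin N)) (x : Fin N → ℂ) : Ω → ℂ :=
  fun i => x i.1


lemma atomMat_neg (N T : ℕ) (Δr θ : ℝ) (φ : EuclideanSpace ℂ (Fin T)) :
    atomMat N T Δr θ (-φ) = -atomMat N T Δr θ φ := by
  ext n t
  simp [atomMat]

/-- a dual certificate interpolating the sign pattern and bounded
by one certifies that the atomic norm equals the sum of the coefficients. -/
theorem atomicNorm_eq_sum_coeffs_of_dual_certificate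
    (N T : ℕ) (hN : 1 ≤ N) (hT : 1 ≤ T) (Δr : ℝ) (hΔr : 0 < Δr)
    (L : ℕ)
    (θ : Fin L → ℝ)
    (hθ : ∀ l, θ l ∈ Set.Ico (0 : ℝ) Real.pi)
    (φ : Fin L → EuclideanSpace ℂ (Fin T))
    (hφ : ∀ l, ‖φ l‖ = 1)
    (c : Fin L → ℝ)
    (hc : ∀ l, 0 < c l)
    (X : Matrix (Fin N) (Fin T) ℂ)
    (hX : X = ∑ l, c l • atomMat N T Δr (θ l) (φ l))
    (V : Matrix (Fin N) (Fin T) ℂ)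
    (hVinterp : ∀ l, dualPoly N T Δr V (θ l) = φ l)
    (hVbound : ∀ ϑ ∈ Set.Ico (0 : ℝ) Real.pi, ‖dualPoly N T Δr V ϑ‖ ≤ 1) :
    atomicNorm N T Δr X = ENNReal.ofReal (∑ l, c l) := by
  have hTpos : 0 < T := hT
  set S := {t : ℝ≥0∞ | ∃ r : ℝ, 0 < r ∧ t = ENNReal.ofReal r ∧
    X ∈ r • convexHull ℝ (atomSet N T Δr)} with hS
  have hcsum : (0:ℝ) ≤ ∑ l, c l := Finset.sum_nonneg fun l _ => (hc l).le
  -- the dual linear functional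
  set f : Matrix (Fin N) (Fin T) ℂ → ℝ :=
    fun Y => (∑ n, ∑ t, (starRingEnd ℂ) (V n t) * Y n t).re with hf
  have hlin : IsLinearMap ℝ f := by
    constructor
    · intro Y Z
      simp [hf, Matrix.add_apply, mul_add, Finset.sum_add_distrib]
      ring
    · intro s Y
      simp only [hf, Matrix.smul_apply, Complex.real_smul]
      rw [show (∑ n, ∑ t, (starRingEnd ℂ) (V n t) * ((s:ℂ) * Y n t))
          = (s:ℂ) * ∑ n, ∑ t, (starRingEnd ℂ) (V n t) * Y n t by
        rw [Finset.mul_sum]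
        refine Finset.sum_congr rfl fun n _ => ?_
        rw [Finset.mul_sum]
        refine Finset.sum_congr rfl fun t _ => ?_
        ring]
      simp [Complex.re_ofReal_mul]
  have hfatom : ∀ (θ' : ℝ) (φ' : EuclideanSpace ℂ (Fin T)),
      f (atomMat N T Δr θ' φ')
        = (inner ℂ φ' (dualPoly N T Δr V θ') : ℂ).re := by
    intro θ' φ'
    have : (∑ n, ∑ t, (starRingEnd ℂ) (V n t) * atomMat N T Δr θ' φ' n t)
        = ∑ t, (starRingEnd ℂ) (φ' t) * dualPoly N T Δr V θ' t := by
      rw [Finset.sum_comm]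
      refine Finset.sum_congr rfl fun t _ => ?_
      simp only [dualPoly, PiLp.toLp_apply, Finset.mul_sum, atomMat, Matrix.of_apply]
      refine Finset.sum_congr rfl fun n _ => ?_
      ring
    simp only [hf]
    rw [this, PiLp.inner_apply]
    simp only [RCLike.inner_apply, mul_comm]
  have hfatom_le : ∀ A ∈ atomSet N T Δr, f A ≤ 1 := by
    rintro A ⟨θ', hθ', φ', hφ', rfl⟩
    rw [hfatom]
    calc (inner ℂ φ' (dualPoly N T Δr V θ') : ℂ).re
        ≤ ‖(inner ℂ φ' (dualPoly N T Δr V θ') : ℂ)‖ := Complex.re_le_norm _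
      _ ≤ ‖φ'‖ * ‖dualPoly N T Δr V θ'‖ := norm_inner_le_norm _ _
      _ ≤ 1 * 1 := by
          apply mul_le_mul (le_of_eq hφ') (hVbound _ hθ') (norm_nonneg _)
          norm_num
      _ = 1 := by norm_num
  have hfX : f X = ∑ l, c l := by
    have hF := map_sum (IsLinearMap.mk' f hlin)
      (fun l => c l • atomMat N T Δr (θ l) (φ l)) Finset.univ
    rw [hX]
    have : ∀ l, f (c l • atomMat N T Δr (θ l) (φ l)) = c l := by
      intro l
      rw [hlin.map_smul, hfatom, hVinterp l]
      have := inner_self_eq_norm_sq (𝕜 := ℂ) (φ l)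
      simp only [RCLike.re_to_complex] at this
      rw [this, hφ l]
      norm_num
    calc f (∑ l, c l • atomMat N T Δr (θ l) (φ l))
        = ∑ l, f (c l • atomMat N T Δr (θ l) (φ l)) := hF
      _ = ∑ l, c l := Finset.sum_congr rfl fun l _ => this l
  -- lower bound
  have hlow : ENNReal.ofReal (∑ l, c l) ≤ sInf S := by
    refine le_sInf ?_
    rintro t ⟨r, hr, rfl, hmem⟩
    apply ENNReal.ofReal_le_ofReal
    obtain ⟨Y, hY, hXY⟩ := hmem
    have hconv : convexHull ℝ (atomSet N T Δr) ⊆ {W | f W ≤ 1} :=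
      convexHull_min hfatom_le (convex_halfSpace_le hlin 1)
    have hfY : f Y ≤ 1 := hconv hY
    have : f X = r * f Y := by rw [← hXY, hlin.map_smul]; rfl
    rw [hfX] at this
    calc (∑ l, c l) = r * f Y := this
      _ ≤ r * 1 := by nlinarith
      _ = r := mul_one r
  -- upper bound
  have hup : sInf S ≤ ENNReal.ofReal (∑ l, c l) := by
    apply ENNReal.le_of_forall_pos_le_add
    intro ε hε _
    have hεR : (0:ℝ) < (ε:ℝ) := hε
    set r : ℝ := (∑ l, c l) + ε with hr
    have hrpos : 0 < r := by positivity
    -- the spare atom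
    set e : EuclideanSpace ℂ (Fin T) := EuclideanSpace.single ⟨0, hTpos⟩ 1 with he
    have hne : ‖e‖ = 1 := by simp [he]
    have h0mem : (0:ℝ) ∈ Set.Ico (0:ℝ) Real.pi := ⟨le_refl _, Real.pi_pos⟩
    set A0 : Matrix (Fin N) (Fin T) ℂ := atomMat N T Δr 0 e with hA0
    have hA0mem : A0 ∈ atomSet N T Δr := ⟨0, h0mem, e, hne, rfl⟩
    have hB0mem : -A0 ∈ atomSet N T Δr :=
      ⟨0, h0mem, -e, by simp [hne], (atomMat_neg N T Δr 0 e).symm⟩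
    -- weights and atoms over Sum type
    set w : (Fin L) ⊕ (Fin 2) → ℝ := Sum.elim c (fun _ => (ε:ℝ)/2) with hw
    set z : (Fin L) ⊕ (Fin 2) → Matrix (Fin N) (Fin T) ℂ :=
      Sum.elim (fun l => atomMat N T Δr (θ l) (φ l)) (fun j => if j = 0 then A0 else -A0) with hz
    have hwsum : ∑ i, w i = r := by
      rw [Fintype.sum_sum_type]
      simp [hw, Fin.sum_univ_two, hr]
      ring
    have hsum : ∑ i, w i • z i = X := by
      rw [Fintype.sum_sum_type, hX]
      simp only [hw, hz, Sum.elim_inl, Sum.elim_inr, Fin.sum_univ_two]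
      norm_num [smul_neg]
    have hcm : Finset.univ.centerMass w z ∈ convexHull ℝ (atomSet N T Δr) := by
      apply Finset.centerMass_mem_convexHull
      · rintro (l | j) _
        · exact (hc l).le
        · show (0:ℝ) ≤ (ε:ℝ)/2
          positivity
      · rw [hwsum]; exact hrpos
      · rintro (l | j) _
        · exact ⟨θ l, hθ l, φ l, hφ l, rfl⟩
        · by_cases hj : j = 0 <;> simp [hz, hj, hA0mem, hB0mem]
    have hXmem : X ∈ r • convexHull ℝ (atomSet N T Δr) := by
      refine ⟨Finset.univ.centerMass w z, hcm, ?_⟩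
      rw [Finset.centerMass, hwsum, hsum]
      show r • (r⁻¹ • X) = X
      exact smul_inv_smul₀ (ne_of_gt hrpos) X
    have : ENNReal.ofReal r ∈ S := ⟨r, hrpos, rfl, hXmem⟩
    calc sInf S ≤ ENNReal.ofReal r := sInf_le this
      _ = ENNReal.ofReal (∑ l, c l) + ENNReal.ofReal (ε:ℝ) := by
          rw [← ENNReal.ofReal_add hcsum hεR.le]
      _ = ENNReal.ofReal (∑ l, c l) + ε := by rw [ENNReal.ofReal_coe_nnreal]
  rw [atomicNorm, ← hS]
  exact le_antisymm hup hlow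


end
end

section
/- (Support localization via the dual polynomial.) Let V ∈ ℂ^{N×T} satisfy sup_{θ ∈ [0,π)} ‖V^* a(θ)‖₂ ≤ 1, and let S = { θ ∈ [0,π) : ‖V^* a(θ)‖₂ = 1 }. Suppose X = Σ_{l=1}^{L} c_l a(θ_l) φ_l^* with distinct angles θ_l ∈ [0,π), c_l > 0, unit vectors φ_l ∈ ℂ^T, and suppose the decomposition attains equality in the dual pairing: Re Tr(X^* V) = Σ_{l=1}^{L} c_l. Then every angle of the decomposition lies in S, i.e. θ_l ∈ S for all l, and moreover φ_l = V^* a(θ_l) for all l. -/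
open Matrix Complex Set
open scoped ENNReal Pointwise

noncomputable section

lemma trace_atom (N T : ℕ) (Δr : ℝ) (V : Matrix (Fin N) (Fin T) ℂ) (θ : ℝ)
    (φ : EuclideanSpace ℂ (Fin T)) :
    Matrix.trace ((atomMat N T Δr θ φ)ᴴ * V)
      = (inner ℂ (dualPoly N T Δr V θ) φ : ℂ) := by
  simp only [Matrix.trace, Matrix.diag, Matrix.mul_apply, Matrix.conjTranspose_apply,
    atomMat, dualPoly, Matrix.of_apply, PiLp.inner_apply, RCLike.inner_apply, map_sum,
    _root_.map_mul, RingHom.id_apply, starRingEnd_self_apply, star_mul', starRingEnd_apply,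
    star_star, Finset.sum_mul, Finset.mul_sum]
  exact Finset.sum_congr rfl fun t _ => Finset.sum_congr rfl fun n _ => by ring

/-- support localization via the dual polynomial.  If the dual
pairing attains the sum of coefficients, every angle of the decomposition lies
where the dual polynomial has unit norm, and the sign vectors are interpolated. -/
theorem support_localization_dual_polynomial
    (N T : ℕ) (hN : 1 ≤ N) (hT : 1 ≤ T) (Δr : ℝ) (hΔr : 0 < Δr)
    (V : Matrix (Fin N) (Fin T) ℂ)
    (hVbound : ∀ θ ∈ Set.Ico (0 : ℝ) Real.pi, ‖dualPoly N T Δr V θ‖ ≤ 1)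
    (S : Set ℝ)
    (hS : S = {θ ∈ Set.Ico (0 : ℝ) Real.pi | ‖dualPoly N T Δr V θ‖ = 1})
    (L : ℕ)
    (θ : Fin L → ℝ)
    (hθ : ∀ l, θ l ∈ Set.Ico (0 : ℝ) Real.pi)
    (hdistinct : Function.Injective θ)
    (c : Fin L → ℝ)
    (hc : ∀ l, 0 < c l)
    (φ : Fin L → EuclideanSpace ℂ (Fin T))
    (hφ : ∀ l, ‖φ l‖ = 1)
    (X : Matrix (Fin N) (Fin T) ℂ)
    (hX : X = ∑ l, c l • atomMat N T Δr (θ l) (φ l))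
    (hequality : (Matrix.trace (Xᴴ * V)).re = ∑ l, c l) :
    ∀ l, θ l ∈ S ∧ φ l = dualPoly N T Δr V (θ l) := by
  set q : Fin L → EuclideanSpace ℂ (Fin T) := fun l => dualPoly N T Δr V (θ l) with hq
  -- trace identity
  have key : Matrix.trace (Xᴴ * V)
      = ∑ l, (c l : ℂ) * (inner ℂ (q l) (φ l) : ℂ) := by
    rw [hX, Matrix.conjTranspose_sum, Matrix.sum_mul, Matrix.trace_sum]
    refine Finset.sum_congr rfl fun l _ => ?_
    have hsmul : (c l • atomMat N T Δr (θ l) (φ l))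
        = ((c l : ℂ) • atomMat N T Δr (θ l) (φ l)) := by
      ext n t; simp [Complex.real_smul]
    rw [hsmul, Matrix.conjTranspose_smul, Matrix.smul_mul, Matrix.trace_smul, trace_atom]
    simp [hq, smul_eq_mul, Complex.star_def, Complex.conj_ofReal]
  -- real part per-term bounds
  have hinner_re_le : ∀ l, ((inner ℂ (q l) (φ l) : ℂ)).re ≤ 1 := by
    intro l
    calc ((inner ℂ (q l) (φ l) : ℂ)).re ≤ ‖(inner ℂ (q l) (φ l) : ℂ)‖ := Complex.re_le_norm _
      _ ≤ ‖q l‖ * ‖φ l‖ := norm_inner_le_norm _ _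
      _ ≤ 1 := by rw [hφ l]; simpa using hVbound (θ l) (hθ l)
  have hsum : ∑ l, c l * ((inner ℂ (q l) (φ l) : ℂ)).re = ∑ l, c l := by
    rw [← hequality, key]
    rw [Complex.re_sum]
    exact Finset.sum_congr rfl fun l _ => by
      simp [Complex.mul_re]
  have hterm : ∀ l, c l * ((inner ℂ (q l) (φ l) : ℂ)).re = c l := by
    have hle : ∀ l ∈ Finset.univ, c l * ((inner ℂ (q l) (φ l) : ℂ)).re ≤ c l := by
      intro l _
      calc c l * ((inner ℂ (q l) (φ l) : ℂ)).re ≤ c l * 1 :=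
        mul_le_mul_of_nonneg_left (hinner_re_le l) (hc l).le
        _ = c l := mul_one _
    intro l
    exact (Finset.sum_eq_sum_iff_of_le hle).mp hsum l (Finset.mem_univ l)
  have hre1 : ∀ l, ((inner ℂ (q l) (φ l) : ℂ)).re = 1 := by
    intro l
    have h := hterm l
    exact mul_left_cancel₀ (hc l).ne' (by rw [h, mul_one])
  intro l
  have hqnorm : ‖q l‖ = 1 := by
    have h1 : (1 : ℝ) ≤ ‖q l‖ := by
      calc (1 : ℝ) = ((inner ℂ (q l) (φ l) : ℂ)).re := (hre1 l).symm
        _ ≤ ‖(inner ℂ (q l) (φ l) : ℂ)‖ := Complex.re_le_norm _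
        _ ≤ ‖q l‖ * ‖φ l‖ := norm_inner_le_norm _ _
        _ = ‖q l‖ := by rw [hφ l, mul_one]
    exact le_antisymm (hVbound (θ l) (hθ l)) h1
  constructor
  · rw [hS]; exact ⟨hθ l, hqnorm⟩
  · have hsq : ‖q l - φ l‖ ^ 2 = 0 := by
      rw [@norm_sub_sq ℂ, hφ l, hqnorm, RCLike.re_to_complex, hre1 l]
      norm_num
    have : q l - φ l = 0 := by
      have := pow_eq_zero_iff (n := 2) (by norm_num) |>.mp hsq
      simpa [norm_eq_zero] using this
    show φ l = q l
    exact (sub_eq_zero.mp this).symm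


end
end
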